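/- Let a = (a1, a2, a3) be a unit vector in R^3 with a1 ≥ a2 ≥ a3 > 0, a1 ≥ a2 + a3, and let t satisfy 0 ≤ t ≤ a1 - a2 - a3. Then the 3-dimensional Lebesgue measure of the slab {x ∈ [-1/2,1/2]^3 : |⟨a,x⟩| ≤ t/2} equals t/a1. -/

import Mathlib

open MeasureTheory Set

theorem slab_cube3_g1
    (a1 a2 a3 t : ℝ) (hunit : a1 ^ 2 + a2 ^ 2 + a3 ^ 2 = 1)
    (h12 : a1 ≥ a2) (h23 : a2 ≥ a3) (h3 : a3 > 0) (hsum : a1 ≥ a2 + a3)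
    (ht0 : 0 ≤ t) (ht1 : t ≤ a1 - a2 - a3) :
    volume {x : EuclideanSpace ℝ (Fin 3) |
        (∀ i, |x i| ≤ 1 / 2) ∧ |a1 * x 0 + a2 * x 1 + a3 * x 2| ≤ t / 2}
      = ENNReal.ofReal (t / a1) := by
  have h2 : 0 < a2 := lt_of_lt_of_le h3 h23
  have ha1 : 0 < a1 := lt_of_lt_of_le h2 h12
  -- reduce to pi volume
  rw [← ((EuclideanSpace.volume_preserving_symm_measurableEquiv_toLp (Fin 3)).symm).measure_preimage_equiv]
  have hset : ((MeasurableEquiv.toLp 2 (Fin 3 → ℝ)).symm.symm) ⁻¹'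
      {x : EuclideanSpace ℝ (Fin 3) |
        (∀ i, |x i| ≤ 1 / 2) ∧ |a1 * x 0 + a2 * x 1 + a3 * x 2| ≤ t / 2}
      = {x : Fin 3 → ℝ |
        (∀ i, |x i| ≤ 1 / 2) ∧ |a1 * x 0 + a2 * x 1 + a3 * x 2| ≤ t / 2} := rfl
  rw [hset]
  -- reduce to product ℝ × (Fin 2 → ℝ)
  rw [← ((volume_preserving_piFinSuccAbove (fun _ : Fin 3 => ℝ) 0).symm).measure_preimage_equiv]
  set T : Set (ℝ × (Fin 2 → ℝ)) :=
    {p | (|p.1| ≤ 1 / 2 ∧ |p.2 0| ≤ 1 / 2 ∧ |p.2 1| ≤ 1 / 2) ∧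
      |a1 * p.1 + a2 * p.2 0 + a3 * p.2 1| ≤ t / 2} with hT
  have hpre : ((MeasurableEquiv.piFinSuccAbove (fun _ : Fin 3 => ℝ) 0).symm) ⁻¹'
      {x : Fin 3 → ℝ |
        (∀ i, |x i| ≤ 1 / 2) ∧ |a1 * x 0 + a2 * x 1 + a3 * x 2| ≤ t / 2} = T := by
    ext ⟨y, z⟩
    have h0 : (MeasurableEquiv.piFinSuccAbove (fun _ : Fin 3 => ℝ) 0).symm (y, z)
        = Fin.cons y z := Fin.insertNth_zero' (n := 2) y z
    have e0 : Fin.cons (α := fun _ : Fin 3 => ℝ) y z 0 = y := rfl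
    have e1 : Fin.cons (α := fun _ : Fin 3 => ℝ) y z 1 = z 0 := rfl
    have e2 : Fin.cons (α := fun _ : Fin 3 => ℝ) y z 2 = z 1 := rfl
    simp only [Set.mem_preimage, Set.mem_setOf_eq, h0, hT, e0, e1, e2]
    rw [Fin.forall_fin_succ]
    simp [Fin.forall_fin_two, e0, e1, e2]
  rw [hpre]
  have hTm : MeasurableSet T := by
    rw [hT]
    simp only [Set.setOf_and]
    exact (((measurableSet_le (by fun_prop) measurable_const).inter
      ((measurableSet_le (by fun_prop) measurable_const).inter
        (measurableSet_le (by fun_prop) measurable_const)))).inter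
      (measurableSet_le (by fun_prop) measurable_const)
  rw [show (volume : Measure (ℝ × (Fin 2 → ℝ))) = (volume : Measure ℝ).prod volume from rfl, Measure.prod_apply_symm hTm]
  have hker : ∀ z : Fin 2 → ℝ, volume ((fun y => (y, z)) ⁻¹' T)
      = Set.indicator (Set.pi Set.univ fun _ : Fin 2 => Icc (-(1/2) : ℝ) (1/2))
          (fun _ => ENNReal.ofReal (t / a1)) z := by
    intro z
    by_cases hz : z ∈ Set.pi Set.univ fun _ : Fin 2 => Icc (-(1/2) : ℝ) (1/2)
    · rw [Set.indicator_of_mem hz]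
      obtain ⟨hz0l, hz0r⟩ := mem_Icc.1 (hz 0 trivial)
      obtain ⟨hz1l, hz1r⟩ := mem_Icc.1 (hz 1 trivial)
      have hEq : ((fun y => (y, z)) ⁻¹' T)
          = Icc ((-(t/2) - (a2 * z 0 + a3 * z 1))/a1) ((t/2 - (a2 * z 0 + a3 * z 1))/a1) := by
        ext y
        simp only [Set.mem_preimage, hT, Set.mem_setOf_eq, Set.mem_Icc]
        constructor
        · rintro ⟨-, h⟩
          obtain ⟨hl, hr⟩ := abs_le.1 h
          constructor
          · rw [div_le_iff₀ ha1]; nlinarith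
          · rw [le_div_iff₀ ha1]; nlinarith
        · rintro ⟨hl, hr⟩
          rw [div_le_iff₀ ha1] at hl
          rw [le_div_iff₀ ha1] at hr
          have habs : |a1 * y + a2 * z 0 + a3 * z 1| ≤ t / 2 :=
            abs_le.2 ⟨by nlinarith, by nlinarith⟩
          have hy : |y| ≤ 1/2 := by
            rw [abs_le]
            constructor
            · nlinarith
            · nlinarith
          refine ⟨⟨hy, abs_le.2 ⟨hz0l, hz0r⟩, abs_le.2 ⟨hz1l, hz1r⟩⟩, habs⟩
      rw [hEq, Real.volume_Icc]
      congr 1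
      field_simp
      ring
    · rw [Set.indicator_of_notMem hz]
      have hempty : ((fun y => (y, z)) ⁻¹' T) = (∅ : Set ℝ) := by
        ext y
        simp only [Set.mem_preimage, hT, Set.mem_setOf_eq, Set.mem_empty_iff_false, iff_false]
        rintro ⟨⟨-, hz0, hz1⟩, -⟩
        refine hz fun j _ => ?_
        fin_cases j
        · exact mem_Icc.2 (abs_le.1 hz0)
        · exact mem_Icc.2 (abs_le.1 hz1)
      rw [hempty, measure_empty]
  rw [lintegral_congr hker,
    lintegral_indicator (MeasurableSet.univ_pi fun _ => measurableSet_Icc),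
    setLIntegral_const]
  have hK : volume (Set.pi Set.univ fun _ : Fin 2 => Icc (-(1/2) : ℝ) (1/2)) = 1 := by
    rw [volume_pi_pi]
    simp [Real.volume_Icc]
    norm_num
  rw [hK, mul_one]
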